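/- Let X₁,…,Xₙ be ℕ-valued random variables on a probability space with E[X₁] < ∞, S = X₁+⋯+Xₙ and S₋₁ = X₂+⋯+Xₙ, and suppose X₁ and S₋₁ are independent. Then for every t ∈ [0,1), ∑_{k=0}^∞ t^k · E[X₁ · 1_{\{S=k\}}] = t · P'_{X₁}(t) · P_{S₋₁}(t), where P'_{X₁}(t) denotes the derivative at t of the probability generating function of X₁. -/

import Mathlib

open MeasureTheory ProbabilityTheory

lemma pgf_eq_tsum {Ω : Type*} [MeasurableSpace Ω] (μ : Measure Ω) [IsProbabilityMeasure μ]
    (Y : Ω → ℕ) (hY : Measurable Y) (s : ℝ) (hs : |s| ≤ 1) :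
    ∫ ω, s ^ (Y ω) ∂μ = ∑' b : ℕ, (μ {ω | Y ω = b}).toReal * s ^ b := by
  have hmap : IsProbabilityMeasure (μ.map Y) := Measure.isProbabilityMeasure_map hY.aemeasurable
  have hint : Integrable (fun b : ℕ => s ^ b) (μ.map Y) := by
    refine Integrable.mono' (integrable_const 1) (measurable_of_countable _).aestronglyMeasurable
      (Filter.Eventually.of_forall fun b => ?_)
    rw [norm_pow]
    exact pow_le_one₀ (norm_nonneg s) (by rwa [Real.norm_eq_abs])
  rw [← integral_map hY.aemeasurable hint.1, integral_countable' hint]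
  refine tsum_congr fun b => ?_
  rw [measureReal_def, Measure.map_apply hY (measurableSet_singleton b)]
  simp [Set.preimage, smul_eq_mul, mul_comm]

lemma t_mul_deriv_pgf {Ω : Type*} [MeasurableSpace Ω] (μ : Measure Ω) [IsProbabilityMeasure μ]
    (Y : Ω → ℕ) (hY : Measurable Y) (t : ℝ) (ht : t ∈ Set.Ico (0 : ℝ) 1) :
    t * deriv (fun s : ℝ => ∫ ω, s ^ (Y ω) ∂μ) t
      = ∑' a : ℕ, (a : ℝ) * (μ {ω | Y ω = a}).toReal * t ^ a := by
  obtain ⟨ht0, ht1⟩ := ht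
  set c : ℕ → ℝ := fun a => (μ {ω | Y ω = a}).toReal with hc
  have hc0 : ∀ a, 0 ≤ c a := fun a => ENNReal.toReal_nonneg
  have hc1 : ∀ a, c a ≤ 1 := fun a => by
    simpa using ENNReal.toReal_mono ENNReal.one_ne_top (prob_le_one (μ := μ))
  set r : ℝ := (1 + t) / 2 with hrdef
  have hr0 : 0 < r := by positivity
  have htr : t < r := by rw [hrdef]; linarith
  have hr1 : r < 1 := by rw [hrdef]; linarith
  have hu : Summable fun a : ℕ => (a : ℝ) * r ^ (a - 1) := by
    rw [← summable_nat_add_iff 1]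
    have h1 : Summable fun a : ℕ => (a : ℝ) ^ 1 * r ^ a :=
      summable_pow_mul_geometric_of_norm_lt_one 1
        (by rw [Real.norm_eq_abs, abs_of_nonneg hr0.le]; exact hr1)
    have h2 : Summable fun a : ℕ => r ^ a := summable_geometric_of_lt_one hr0.le hr1
    refine (h1.add h2).congr fun a => ?_
    push_cast
    ring
  have hderiv : HasDerivAt (fun s : ℝ => ∑' a, c a * s ^ a)
      (∑' a : ℕ, c a * (a * t ^ (a - 1))) t := by
    refine hasDerivAt_tsum_of_isPreconnected hu isOpen_Ioo (convex_Ioo (-r) r).isPreconnected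
      (fun a y _ => (hasDerivAt_pow a y).const_mul (c a)) (fun a y hy => ?_)
      (Set.mem_Ioo.2 ⟨by linarith, htr⟩) ?_ (Set.mem_Ioo.2 ⟨by linarith, htr⟩)
    · have hyr : |y| ≤ r := (abs_lt.2 ⟨hy.1, hy.2⟩).le
      rw [norm_mul, norm_mul, Real.norm_eq_abs, Real.norm_eq_abs, Real.norm_eq_abs,
        abs_of_nonneg (hc0 a), Nat.abs_cast, abs_pow]
      calc c a * ((a : ℝ) * |y| ^ (a - 1)) ≤ 1 * ((a : ℝ) * r ^ (a - 1)) := by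
            apply mul_le_mul (hc1 a) _ (by positivity) zero_le_one
            exact mul_le_mul_of_nonneg_left (pow_le_pow_left₀ (abs_nonneg y) hyr _) (Nat.cast_nonneg a)
        _ = (a : ℝ) * r ^ (a - 1) := one_mul _
    · refine Summable.of_nonneg_of_le (fun a => mul_nonneg (hc0 a) (pow_nonneg ht0 a))
        (fun a => mul_le_of_le_one_left (pow_nonneg ht0 a) (hc1 a))
        (summable_geometric_of_lt_one ht0 ht1)
  have heq : deriv (fun s : ℝ => ∫ ω, s ^ (Y ω) ∂μ) t = deriv (fun s : ℝ => ∑' a, c a * s ^ a) t := by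
    apply Filter.EventuallyEq.deriv_eq
    filter_upwards [Ioo_mem_nhds (show (-1 : ℝ) < t by linarith) ht1] with s hs
    rw [pgf_eq_tsum μ Y hY s (abs_lt.2 ⟨hs.1, hs.2⟩).le]
  rw [heq, hderiv.deriv, ← tsum_mul_left]
  refine tsum_congr fun a => ?_
  cases a with
  | zero => simp
  | succ m => rw [pow_succ]; push_cast; simp only [hc]; ring_nf

theorem ogf_expected_allocation_indep
    {Ω : Type*} [MeasurableSpace Ω] (μ : Measure Ω) [IsProbabilityMeasure μ]
    (n : ℕ) (X : Fin (n + 1) → Ω → ℕ) (hX : ∀ i, Measurable (X i))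
    (hint : Integrable (fun ω => (X 0 ω : ℝ)) μ)
    (S Sm : Ω → ℕ)
    (hS : ∀ ω, S ω = ∑ i, X i ω)
    (hSm : ∀ ω, Sm ω = ∑ i : Fin n, X i.succ ω)
    (hindep : IndepFun (X 0) Sm μ)
    (t : ℝ) (ht : t ∈ Set.Ico (0 : ℝ) 1) :
    ∑' k : ℕ, t ^ k * ∫ ω in {ω | S ω = k}, (X 0 ω : ℝ) ∂μ
      = t * deriv (fun s : ℝ => ∫ ω, s ^ (X 0 ω) ∂μ) t * ∫ ω, t ^ (Sm ω) ∂μ := by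
  obtain ⟨ht0, ht1⟩ := ht
  have hSmm : Measurable Sm := by
    have h : Sm = fun ω => ∑ i : Fin n, X i.succ ω := funext hSm
    rw [h]; exact Finset.measurable_sum _ fun i _ => hX i.succ
  set c : ℕ → ℝ := fun a => (μ {ω | X 0 ω = a}).toReal with hcdef
  set d : ℕ → ℝ := fun b => (μ {ω | Sm ω = b}).toReal with hddef
  have hc0 : ∀ a, 0 ≤ c a := fun a => ENNReal.toReal_nonneg
  have hd0 : ∀ a, 0 ≤ d a := fun a => ENNReal.toReal_nonneg
  have hc1 : ∀ a, c a ≤ 1 := fun a => by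
    simpa using ENNReal.toReal_mono ENNReal.one_ne_top (prob_le_one (μ := μ))
  have hd1 : ∀ a, d a ≤ 1 := fun a => by
    simpa using ENNReal.toReal_mono ENNReal.one_ne_top (prob_le_one (μ := μ))
  have hadd : ∀ ω, S ω = X 0 ω + Sm ω := fun ω => by rw [hS, hSm, Fin.sum_univ_succ]
  have hkey : ∀ k : ℕ, ∫ ω in {ω | S ω = k}, (X 0 ω : ℝ) ∂μ
      = ∑ a ∈ Finset.range (k + 1), (a : ℝ) * c a * d (k - a) := by
    intro k
    have hset : {ω | S ω = k} = ⋃ a ∈ Finset.range (k + 1), (X 0 ⁻¹' {a} ∩ Sm ⁻¹' {k - a}) := by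
      ext ω
      simp only [Set.mem_setOf_eq, Set.mem_iUnion, Finset.mem_range, Set.mem_inter_iff,
        Set.mem_preimage, Set.mem_singleton_iff, hadd ω]
      constructor
      · rintro rfl; exact ⟨X 0 ω, by omega, rfl, by omega⟩
      · rintro ⟨a, ha, rfl, h2⟩; omega
    rw [hset, integral_biUnion_finset]
    · refine Finset.sum_congr rfl fun a ha => ?_
      have hval : ∀ ω ∈ X 0 ⁻¹' {a} ∩ Sm ⁻¹' {k - a}, ((X 0 ω : ℝ)) = (a : ℝ) := by
        rintro ω ⟨h1, _⟩
        simp only [Set.mem_preimage, Set.mem_singleton_iff] at h1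
        rw [h1]
      rw [setIntegral_congr_fun (((hX 0) (measurableSet_singleton a)).inter
          (hSmm (measurableSet_singleton _))) hval, setIntegral_const, measureReal_def,
        hindep.measure_inter_preimage_eq_mul _ _ (measurableSet_singleton a)
          (measurableSet_singleton _), ENNReal.toReal_mul, smul_eq_mul]
      have e1 : X 0 ⁻¹' {a} = {ω | X 0 ω = a} := rfl
      have e2 : Sm ⁻¹' {k - a} = {ω | Sm ω = k - a} := rfl
      rw [e1, e2, hcdef, hddef]; ring
    · exact fun a _ => ((hX 0) (measurableSet_singleton a)).inter
        (hSmm (measurableSet_singleton _))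
    · intro a _ b _ hab
      simp only [Function.onFun]
      refine Set.disjoint_left.2 ?_
      rintro ω ⟨h1, _⟩ ⟨h2, _⟩
      simp only [Set.mem_preimage, Set.mem_singleton_iff] at h1 h2
      exact hab (h1 ▸ h2 ▸ rfl)
    · exact fun a _ => hint.integrableOn
  set f : ℕ → ℝ := fun a => (a : ℝ) * c a * t ^ a with hfdef
  set g : ℕ → ℝ := fun b => d b * t ^ b with hgdef
  have htnorm : ‖t‖ < 1 := by rw [Real.norm_eq_abs, abs_of_nonneg ht0]; exact ht1
  have hb : Summable (fun a : ℕ => (a : ℝ) * t ^ a) :=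
    (summable_pow_mul_geometric_of_norm_lt_one 1 htnorm).congr (fun a => by ring)
  have hsumf : Summable fun a => ‖f a‖ := by
    refine Summable.of_nonneg_of_le (fun a => norm_nonneg _) (fun a => ?_) hb
    rw [hfdef, Real.norm_eq_abs, abs_of_nonneg (by positivity)]
    calc (a : ℝ) * c a * t ^ a ≤ (a : ℝ) * 1 * t ^ a := by
          apply mul_le_mul_of_nonneg_right _ (pow_nonneg ht0 a)
          exact mul_le_mul_of_nonneg_left (hc1 a) (Nat.cast_nonneg a)
      _ = (a : ℝ) * t ^ a := by ring
  have hsumg : Summable fun b => ‖g b‖ := by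
    refine Summable.of_nonneg_of_le (fun b => norm_nonneg _) (fun b => ?_)
      (summable_geometric_of_lt_one ht0 ht1)
    rw [hgdef, Real.norm_eq_abs, abs_of_nonneg (by positivity)]
    exact mul_le_of_le_one_left (pow_nonneg ht0 b) (hd1 b)
  calc ∑' k : ℕ, t ^ k * ∫ ω in {ω | S ω = k}, (X 0 ω : ℝ) ∂μ
      = ∑' k : ℕ, ∑ kl ∈ Finset.HasAntidiagonal.antidiagonal k, f kl.1 * g kl.2 := by
        refine tsum_congr fun k => ?_
        rw [hkey k, Finset.Nat.sum_antidiagonal_eq_sum_range_succ_mk, Finset.mul_sum]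
        refine Finset.sum_congr rfl fun a ha => ?_
        have hak : a ≤ k := by simp only [Finset.mem_range] at ha; omega
        have htk : t ^ k = t ^ a * t ^ (k - a) := by
          rw [← pow_add]; congr 1; omega
        rw [hfdef, hgdef, htk]; ring
    _ = (∑' a, f a) * (∑' b, g b) :=
        (tsum_mul_tsum_eq_tsum_sum_antidiagonal_of_summable_norm hsumf hsumg).symm
    _ = t * deriv (fun s : ℝ => ∫ ω, s ^ (X 0 ω) ∂μ) t * ∫ ω, t ^ (Sm ω) ∂μ := by
        rw [t_mul_deriv_pgf μ (X 0) (hX 0) t ⟨ht0, ht1⟩,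
          pgf_eq_tsum μ Sm hSmm t (by rw [abs_of_nonneg ht0]; exact ht1.le)]
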